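/- Let (W,w) be a Riesz fusion basis for H, let v be a family of weights, and let (V,v) be a Q-dual fusion frame of (W,w) with Q block-diagonal. Then S_{W,w}^{-1} W_i ⊆ V_i for each i = 1,…,m. -/

import Mathlib

noncomputable section

open scoped InnerProductSpace

variable {𝕜 : Type} [RCLike 𝕜]
variable {H : Type} [NormedAddCommGroup H] [InnerProductSpace 𝕜 H] [FiniteDimensional 𝕜 H]
variable {m : ℕ}

/-- The Hilbert space `𝒲 = ⊕ᵢ Wᵢ` of a fusion sequence, with the ℓ² inner product. -/
abbrev FFSpace (W : Fin m → Submodule 𝕜 H) : Type := PiLp 2 (fun i => ↥(W i))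

/-- The synthesis operator `T_{W,w} : 𝒲 → H`, `(fᵢ)ᵢ ↦ Σᵢ wᵢ fᵢ`. -/
def synthOp (W : Fin m → Submodule 𝕜 H) (w : Fin m → ℝ) : FFSpace W →ₗ[𝕜] H where
  toFun f := ∑ i, (w i : 𝕜) • (f i : H)
  map_add' f g := by
    simp [Finset.sum_add_distrib, smul_add]
  map_smul' c f := by
    simp [Finset.smul_sum]
    congr 1; funext i; rw [smul_comm]

/-- The analysis operator `T*_{W,w} : H → 𝒲`, `f ↦ (wᵢ π_{Wᵢ} f)ᵢ`. -/
def analysisOp (W : Fin m → Submodule 𝕜 H) (w : Fin m → ℝ) : H →ₗ[𝕜] FFSpace W where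
  toFun f := WithLp.toLp 2 (fun i => (w i : 𝕜) • ((W i).orthogonalProjectionOnto f))
  map_add' f g := by
    ext i; simp [smul_add]
  map_smul' c f := by
    ext i; simp; rw [smul_comm]

/-- The coordinate operator `M_{J,W} : 𝒲 → 𝒲`, keeping the coordinates in `J`. -/
def MJ (W : Fin m → Submodule 𝕜 H) (J : Finset (Fin m)) : FFSpace W →ₗ[𝕜] FFSpace W where
  toFun f := WithLp.toLp 2 (fun j => if j ∈ J then f j else 0)
  map_add' f g := by
    ext j; by_cases h : j ∈ J <;> simp [h]
  map_smul' c f := by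
    ext j; by_cases h : j ∈ J <;> simp [h]

/-- `Q : 𝒲 → 𝒱` is block-diagonal if `Q M_{j,W} 𝒲 ⊆ M_{j,V} 𝒱` for all `j`. -/
def IsBlockDiagonal (W V : Fin m → Submodule 𝕜 H) (Q : FFSpace W →ₗ[𝕜] FFSpace V) : Prop :=
  ∀ j, LinearMap.range (Q ∘ₗ MJ W {j}) ≤ LinearMap.range (MJ V {j})

/-- `Q : 𝒲 → 𝒱` is component preserving if `Q M_{j,W} 𝒲 = M_{j,V} 𝒱` for all `j`. -/
def IsComponentPreserving (W V : Fin m → Submodule 𝕜 H) (Q : FFSpace W →ₗ[𝕜] FFSpace V) : Prop :=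
  ∀ j, LinearMap.range (Q ∘ₗ MJ W {j}) = LinearMap.range (MJ V {j})

/-- The orthogonal projection onto `U` as an endomorphism of `H`. -/
def projL (U : Submodule 𝕜 H) : H →ₗ[𝕜] H :=
  U.subtype ∘ₗ (U.orthogonalProjectionOnto : H →L[𝕜] U).toLinearMap

/-- The fusion frame operator `S_{W,w} = Σᵢ wᵢ² π_{Wᵢ}`. -/
def fusionFrameOp (W : Fin m → Submodule 𝕜 H) (w : Fin m → ℝ) : H →ₗ[𝕜] H :=
  ∑ i, ((w i ^ 2 : ℝ) : 𝕜) • projL (W i)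

omit [FiniteDimensional 𝕜 H] in
lemma aux_eq_zero_of_sum {m : ℕ} {W : Fin m → Submodule 𝕜 H} (hind : iSupIndep W)
    (g : Fin m → H) (hg : ∀ j, g j ∈ W j) (hsum : ∑ j, g j = 0) : ∀ j, g j = 0 := by
  intro j
  have h1 : g j = -∑ k ∈ Finset.univ.erase j, g k := by
    have h := Finset.add_sum_erase Finset.univ g (Finset.mem_univ j)
    rw [hsum] at h
    rw [eq_comm, neg_eq_iff_add_eq_zero, add_comm]; exact h ▸ rfl
  have h2 : g j ∈ ⨆ k, ⨆ (_ : k ≠ j), W k := by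
    rw [h1]
    refine Submodule.neg_mem _ (Submodule.sum_mem _ fun k hk => ?_)
    have hkj : k ≠ j := (Finset.mem_erase.mp hk).1
    exact Submodule.mem_iSup_of_mem k (Submodule.mem_iSup_of_mem hkj (hg k))
  exact (Submodule.disjoint_def.mp (hind j)) _ (hg j) h2

/-- if `(W,w)` is a Riesz fusion basis and `(V,v)` is a block-diagonal
`Q`-dual fusion frame of `(W,w)`, then `S_{W,w}⁻¹ Wᵢ ⊆ Vᵢ` for each `i`
(`S_{W,w}⁻¹ Wᵢ` is expressed as the preimage of `Wᵢ` under `S_{W,w}`, which is bijective). -/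
theorem comap_fusionFrameOp_le_of_blockDiagonal_dual
    {𝕜 : Type} [RCLike 𝕜] {H : Type} [NormedAddCommGroup H] [InnerProductSpace 𝕜 H]
    [FiniteDimensional 𝕜 H] {m : ℕ}
    (W : Fin m → Submodule 𝕜 H) (w : Fin m → ℝ) (hw : ∀ i, 0 < w i)
    (hRiesz : iSupIndep W ∧ ⨆ i, W i = ⊤)
    (V : Fin m → Submodule 𝕜 H) (v : Fin m → ℝ) (hv : ∀ i, 0 < v i) (hV : ⨆ i, V i = ⊤)
    (Q : FFSpace W →ₗ[𝕜] FFSpace V)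
    (hdual : synthOp V v ∘ₗ Q ∘ₗ analysisOp W w = LinearMap.id)
    (hbd : IsBlockDiagonal W V Q) :
    ∀ i, Submodule.comap (fusionFrameOp W w) (W i) ≤ V i := by

  intro i x hx
  rw [Submodule.mem_comap] at hx
  have hSx : fusionFrameOp W w x
      = ∑ j, ((w j ^ 2 : ℝ) : 𝕜) • (((W j).orthogonalProjectionOnto x : H)) := by
    simp [fusionFrameOp, projL]
  set g : Fin m → H := fun j =>
    ((w j ^ 2 : ℝ) : 𝕜) • (((W j).orthogonalProjectionOnto x : H))
      - (if j = i then fusionFrameOp W w x else 0) with hg_def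
  have hg : ∀ j, g j ∈ W j := by
    intro j
    refine Submodule.sub_mem _ (Submodule.smul_mem _ _ (Submodule.coe_mem _)) ?_
    by_cases h : j = i
    · subst h; simpa using hx
    · simp [h]
  have hsum : ∑ j, g j = 0 := by
    rw [hg_def]
    rw [Finset.sum_sub_distrib, Finset.sum_ite_eq' Finset.univ i
      (fun _ => fusionFrameOp W w x), ← hSx]
    simp
  have hz : ∀ j, j ≠ i → ((W j).orthogonalProjectionOnto x : H) = 0 := by
    intro j hji
    have h0 := aux_eq_zero_of_sum hRiesz.1 g hg hsum j
    rw [hg_def] at h0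
    simp only [hji, if_false, sub_zero] at h0
    have hwj : ((w j ^ 2 : ℝ) : 𝕜) ≠ 0 := by
      simp [pow_ne_zero, (hw j).ne']
    exact (smul_eq_zero.mp h0).resolve_left hwj
  have hM : MJ W {i} (analysisOp W w x) = analysisOp W w x := by
    ext j
    by_cases h : j = i
    · simp [MJ, h]
    · have h0 : ((W j).orthogonalProjectionOnto x) = (0 : W j) :=
        Subtype.ext (hz j h)
      simp [MJ, h, analysisOp, h0]
  have hmem : Q (analysisOp W w x) ∈ LinearMap.range (MJ V {i}) := by
    apply hbd i
    exact ⟨analysisOp W w x, by simp [hM]⟩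
  obtain ⟨f, hf⟩ := hmem
  have hxeq : x = synthOp V v (Q (analysisOp W w x)) := by
    have h := LinearMap.ext_iff.mp hdual x
    simpa using h.symm
  rw [hxeq, ← hf]
  have hfin : synthOp V v (MJ V {i} f) = (v i : 𝕜) • ((f i : H)) := by
    rw [synthOp]
    simp only [LinearMap.coe_mk, AddHom.coe_mk]
    rw [Finset.sum_eq_single i]
    · simp [MJ]
    · intro b _ hb; simp [MJ, hb]
    · intro h; exact absurd (Finset.mem_univ i) h
  rw [hfin]
  exact Submodule.smul_mem _ _ (Submodule.coe_mem _)
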